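/- With ρ_i the standard Gaussian probability of the quantization cell [i/2 - 1/4, i/2 + 1/4], the tail entropy sum over all integers i with |i| ≥ 4 satisfies ∑_{|i| ≥ 4} (-ρ_i·log ρ_i) ≤ 1.21. -/

import Mathlib

open MeasureTheory ProbabilityTheory Real

/-- `log t ≤ t / e` for `t > 0`. -/
lemma aux_log_le_mul_exp_neg_one {t : ℝ} (ht : 0 < t) : Real.log t ≤ t * Real.exp (-1) := by
  have h := Real.log_le_sub_one_of_pos (mul_pos ht (Real.exp_pos (-1)))
  rw [Real.log_mul (ne_of_gt ht) (Real.exp_ne_zero _), Real.log_exp] at h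
  linarith

/-- `negMulLog x ≤ (2/e) √x` for `x ≥ 0`. -/
lemma aux_negMulLog_le_sqrt {x : ℝ} (hx : 0 ≤ x) :
    Real.negMulLog x ≤ 2 * Real.exp (-1) * Real.sqrt x := by
  rcases eq_or_lt_of_le hx with h | h
  · simp [← h]
  · have hs : 0 < Real.sqrt x := Real.sqrt_pos.2 h
    have hinv : 0 < (Real.sqrt x)⁻¹ := inv_pos.2 hs
    have h1 : Real.log ((Real.sqrt x)⁻¹) ≤ (Real.sqrt x)⁻¹ * Real.exp (-1) :=
      aux_log_le_mul_exp_neg_one hinv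
    have h2 : Real.log x = 2 * Real.log (Real.sqrt x) := by
      rw [Real.log_sqrt hx]; ring
    have h3 : Real.log ((Real.sqrt x)⁻¹) = - Real.log (Real.sqrt x) := Real.log_inv _
    have h4 : x * (Real.sqrt x)⁻¹ = Real.sqrt x := by
      rw [← div_eq_mul_inv]; exact Real.div_sqrt
    have h5 : Real.negMulLog x = 2 * x * Real.log ((Real.sqrt x)⁻¹) := by
      rw [Real.negMulLog, h2, h3]; ring
    rw [h5]
    calc 2 * x * Real.log ((Real.sqrt x)⁻¹) ≤ 2 * x * ((Real.sqrt x)⁻¹ * Real.exp (-1)) := by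
          apply mul_le_mul_of_nonneg_left h1 (by linarith)
      _ = 2 * Real.exp (-1) * (x * (Real.sqrt x)⁻¹) := by ring
      _ = 2 * Real.exp (-1) * Real.sqrt x := by rw [h4]

/-- Gaussian measure of a cell at distance `t` from the origin. -/
lemma aux_cell_le {i : ℤ} (hi : 4 ≤ |i|) :
    ((gaussianReal 0 1)
        (Set.Icc (((i : ℤ) : ℝ) / 2 - 1 / 4) (((i : ℤ) : ℝ) / 2 + 1 / 4))).toReal
      ≤ Real.exp (-((((|i| : ℤ) : ℝ) / 2 - 1 / 4) ^ 2) / 2) / 5 := by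
  have hm : (4 : ℝ) ≤ ((|i| : ℤ) : ℝ) := by exact_mod_cast hi
  -- pointwise bound on the squared distance
  have hsq : ∀ x ∈ Set.Icc (((i : ℤ) : ℝ) / 2 - 1 / 4) (((i : ℤ) : ℝ) / 2 + 1 / 4),
      (((|i| : ℤ) : ℝ) / 2 - 1 / 4) ^ 2 ≤ x ^ 2 := by
    intro x hx
    have hx1 := hx.1
    have hx2 := hx.2
    rcases le_or_gt 0 i with hpos | hneg
    · have habs : ((|i| : ℤ) : ℝ) = ((i : ℤ) : ℝ) := by
        exact_mod_cast congrArg (Int.cast : ℤ → ℝ) (abs_of_nonneg hpos)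
      rw [habs]
      have hxa : ((i : ℤ) : ℝ) / 2 - 1 / 4 ≤ x := hx1
      have h0 : (0 : ℝ) ≤ ((i : ℤ) : ℝ) / 2 - 1 / 4 := by rw [← habs]; linarith
      exact pow_le_pow_left₀ h0 hxa 2
    · have habs : ((|i| : ℤ) : ℝ) = -((i : ℤ) : ℝ) := by
        exact_mod_cast congrArg (Int.cast : ℤ → ℝ) (abs_of_neg hneg)
      rw [habs]
      have h0 : (0 : ℝ) ≤ -((i : ℤ) : ℝ) / 2 - 1 / 4 := by rw [← habs]; linarith
      have h5 : -((i : ℤ) : ℝ) / 2 - 1 / 4 ≤ -x := by linarith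
      have := pow_le_pow_left₀ h0 h5 2
      nlinarith
  have hpdf : ∀ x ∈ Set.Icc (((i : ℤ) : ℝ) / 2 - 1 / 4) (((i : ℤ) : ℝ) / 2 + 1 / 4),
      gaussianPDFReal 0 1 x
        ≤ (2 / 5) * Real.exp (-((((|i| : ℤ) : ℝ) / 2 - 1 / 4) ^ 2) / 2) := by
    intro x hx
    rw [gaussianPDFReal]
    have hpi : (3.141592 : ℝ) < π := Real.pi_gt_d6
    have h2pi : (25 / 4 : ℝ) ≤ 2 * π * ((1 : NNReal) : ℝ) := by
      push_cast; nlinarith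
    have hsqrt : (5 / 2 : ℝ) ≤ Real.sqrt (2 * π * ((1 : NNReal) : ℝ)) := by
      rw [Real.le_sqrt (by norm_num) (by nlinarith)]
      nlinarith
    have hsqrtpos : (0 : ℝ) < Real.sqrt (2 * π * ((1 : NNReal) : ℝ)) := by linarith
    have hinv : (Real.sqrt (2 * π * ((1 : NNReal) : ℝ)))⁻¹ ≤ 2 / 5 := by
      rw [inv_le_comm₀ hsqrtpos (by norm_num)]
      linarith
    have hexp : Real.exp (-(x - 0) ^ 2 / (2 * ((1 : NNReal) : ℝ)))
        ≤ Real.exp (-((((|i| : ℤ) : ℝ) / 2 - 1 / 4) ^ 2) / 2) := by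
      apply Real.exp_le_exp.2
      have h := hsq x hx
      simp only [NNReal.coe_one]
      nlinarith
    exact mul_le_mul hinv hexp (Real.exp_nonneg _) (by norm_num)
  -- measure as integral of the density
  rw [gaussianReal_apply_eq_integral 0 one_ne_zero,
    ENNReal.toReal_ofReal (setIntegral_nonneg measurableSet_Icc
      (fun x _ => gaussianPDFReal_nonneg 0 1 x))]
  have hint : IntegrableOn (gaussianPDFReal 0 1)
      (Set.Icc (((i : ℤ) : ℝ) / 2 - 1 / 4) (((i : ℤ) : ℝ) / 2 + 1 / 4)) volume :=
    (integrable_gaussianPDFReal 0 1).integrableOn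
  have hconst : IntegrableOn
      (fun _ : ℝ => (2 / 5) * Real.exp (-((((|i| : ℤ) : ℝ) / 2 - 1 / 4) ^ 2) / 2))
      (Set.Icc (((i : ℤ) : ℝ) / 2 - 1 / 4) (((i : ℤ) : ℝ) / 2 + 1 / 4)) volume :=
    integrableOn_const measure_Icc_lt_top.ne
  calc ∫ x in Set.Icc (((i : ℤ) : ℝ) / 2 - 1 / 4) (((i : ℤ) : ℝ) / 2 + 1 / 4),
        gaussianPDFReal 0 1 x
      ≤ ∫ _x in Set.Icc (((i : ℤ) : ℝ) / 2 - 1 / 4) (((i : ℤ) : ℝ) / 2 + 1 / 4),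
        (2 / 5) * Real.exp (-((((|i| : ℤ) : ℝ) / 2 - 1 / 4) ^ 2) / 2) :=
        setIntegral_mono_on hint hconst measurableSet_Icc hpdf
    _ = (volume (Set.Icc (((i : ℤ) : ℝ) / 2 - 1 / 4) (((i : ℤ) : ℝ) / 2 + 1 / 4))).toReal
        * ((2 / 5) * Real.exp (-((((|i| : ℤ) : ℝ) / 2 - 1 / 4) ^ 2) / 2)) := by
        rw [setIntegral_const]; rfl
    _ = (1 / 2 : ℝ) * ((2 / 5) * Real.exp (-((((|i| : ℤ) : ℝ) / 2 - 1 / 4) ^ 2) / 2)) := by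
        rw [Real.volume_Icc]
        congr 1
        rw [show ((i : ℤ) : ℝ) / 2 + 1 / 4 - (((i : ℤ) : ℝ) / 2 - 1 / 4) = (1 / 2 : ℝ) by ring]
        rw [ENNReal.toReal_ofReal (by norm_num)]
    _ = Real.exp (-((((|i| : ℤ) : ℝ) / 2 - 1 / 4) ^ 2) / 2) / 5 := by ring

/-- The embedding of the tail index set into `ℕ`. -/
def auxPhi (p : {i : ℤ // 4 ≤ |i|}) : ℕ :=
  if 0 ≤ p.1 then (2 * (p.1 - 4)).toNat else (2 * (-p.1 - 4) + 1).toNat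

lemma auxPhi_injective : Function.Injective auxPhi := by
  intro a b h
  have ha := a.2
  have hb := b.2
  rw [le_abs] at ha hb
  unfold auxPhi at h
  have : a.1 = b.1 := by split_ifs at h <;> omega
  exact Subtype.ext this

lemma auxPhi_le {i : ℤ} (hi : 4 ≤ |i|) :
    ((auxPhi ⟨i, hi⟩ : ℕ) : ℝ) ≤ 2 * ((|i| : ℤ) : ℝ) - 7 := by
  unfold auxPhi
  have hi' := hi
  rw [le_abs] at hi'
  rcases le_or_gt 0 i with h | h
  · simp only [h, if_true]
    have h4 : (4 : ℤ) ≤ i := by omega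
    have hto : ((2 * (i - 4)).toNat : ℤ) = 2 * (i - 4) := Int.toNat_of_nonneg (by omega)
    have habs : |i| = i := abs_of_nonneg h
    rw [habs]
    have : (((2 * (i - 4)).toNat : ℕ) : ℝ) = 2 * ((i : ℤ) : ℝ) - 8 := by
      rw [← Int.cast_natCast, hto]; push_cast; ring
    rw [this]
    have : (4 : ℝ) ≤ ((i : ℤ) : ℝ) := by exact_mod_cast h4
    linarith
  · simp only [not_le.2 h, if_false]
    have h4 : i ≤ -4 := by omega
    have hto : ((2 * (-i - 4) + 1).toNat : ℤ) = 2 * (-i - 4) + 1 :=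
      Int.toNat_of_nonneg (by omega)
    have habs : |i| = -i := abs_of_neg h
    rw [habs]
    have heq : (((2 * (-i - 4) + 1).toNat : ℕ) : ℝ) = 2 * (-(i : ℤ) : ℝ) - 7 := by
      rw [← Int.cast_natCast, hto]; push_cast; ring
    rw [heq]
    push_cast
    linarith

theorem tsum_negMulLog_cells_tail_le :
    ∑' i : {i : ℤ // 4 ≤ |i|},
        Real.negMulLog
          (((gaussianReal 0 1)
              (Set.Icc (((i : ℤ) : ℝ) / 2 - 1 / 4) (((i : ℤ) : ℝ) / 2 + 1 / 4))).toReal)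
      ≤ 1.21 := by
  have hs0 : (0 : ℝ) ≤ Real.exp (-(7 / 32)) := Real.exp_nonneg _
  have hs1 : Real.exp (-(7 / 32)) < 1 := Real.exp_lt_one_iff.2 (by norm_num)
  have hsqrt5 : (2236 / 1000 : ℝ) ≤ Real.sqrt 5 := by
    rw [Real.le_sqrt (by norm_num) (by norm_num)]
    norm_num
  have hsqrt5pos : (0 : ℝ) < Real.sqrt 5 := by linarith
  have hC0 : (0 : ℝ) ≤ 2 * Real.exp (-(99 / 64)) / Real.sqrt 5 := by positivity
  set g : ℕ → ℝ := fun n => 2 * Real.exp (-(99 / 64)) / Real.sqrt 5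
      * Real.exp (-(7 / 32)) ^ n with hgdef
  have hg_summable : Summable g :=
    (summable_geometric_of_lt_one hs0 hs1).mul_left _
  have hg_nonneg : ∀ n, 0 ≤ g n := fun n => mul_nonneg hC0 (pow_nonneg hs0 n)
  set f : {i : ℤ // 4 ≤ |i|} → ℝ := fun p =>
    Real.negMulLog
      (((gaussianReal 0 1)
          (Set.Icc (((p : ℤ) : ℝ) / 2 - 1 / 4) (((p : ℤ) : ℝ) / 2 + 1 / 4))).toReal) with hfdef
  -- key per-term bound
  have key : ∀ p : {i : ℤ // 4 ≤ |i|}, f p ≤ g (auxPhi p) := by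
    rintro ⟨i, hi⟩
    have hρ0 : (0 : ℝ) ≤ ((gaussianReal 0 1)
        (Set.Icc (((i : ℤ) : ℝ) / 2 - 1 / 4) (((i : ℤ) : ℝ) / 2 + 1 / 4))).toReal :=
      ENNReal.toReal_nonneg
    have hm : (4 : ℝ) ≤ ((|i| : ℤ) : ℝ) := by exact_mod_cast hi
    have hρle := aux_cell_le hi
    have h1 := aux_negMulLog_le_sqrt hρ0
    have h2 : Real.sqrt (((gaussianReal 0 1)
          (Set.Icc (((i : ℤ) : ℝ) / 2 - 1 / 4) (((i : ℤ) : ℝ) / 2 + 1 / 4))).toReal)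
        ≤ Real.sqrt (Real.exp (-((((|i| : ℤ) : ℝ) / 2 - 1 / 4) ^ 2) / 2) / 5) :=
      Real.sqrt_le_sqrt hρle
    have h3 : Real.sqrt (Real.exp (-((((|i| : ℤ) : ℝ) / 2 - 1 / 4) ^ 2) / 2) / 5)
        = Real.exp (-((((|i| : ℤ) : ℝ) / 2 - 1 / 4) ^ 2) / 4) / Real.sqrt 5 := by
      rw [Real.sqrt_div (Real.exp_nonneg _), ← Real.exp_half]
      congr 2
      ring
    have hn := auxPhi_le hi
    have hL : 2 * Real.exp (-1)
          * (Real.exp (-((((|i| : ℤ) : ℝ) / 2 - 1 / 4) ^ 2) / 4) / Real.sqrt 5)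
        = 2 * Real.exp (-1 + -((((|i| : ℤ) : ℝ) / 2 - 1 / 4) ^ 2) / 4) / Real.sqrt 5 := by
      rw [show (-1 : ℝ) + -((((|i| : ℤ) : ℝ) / 2 - 1 / 4) ^ 2) / 4
          = (-1) + (-((((|i| : ℤ) : ℝ) / 2 - 1 / 4) ^ 2) / 4) by ring, Real.exp_add]
      ring
    have hR : g (auxPhi ⟨i, hi⟩)
        = 2 * Real.exp (-(99 / 64) + ((auxPhi ⟨i, hi⟩ : ℕ) : ℝ) * -(7 / 32)) / Real.sqrt 5 := by
      rw [hgdef]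
      simp only
      rw [← Real.exp_nat_mul, Real.exp_add]
      ring
    have h4 : 2 * Real.exp (-1)
          * (Real.exp (-((((|i| : ℤ) : ℝ) / 2 - 1 / 4) ^ 2) / 4) / Real.sqrt 5)
        ≤ g (auxPhi ⟨i, hi⟩) := by
      rw [hL, hR]
      gcongr 2 * Real.exp ?_ / Real.sqrt 5
      nlinarith [sq_nonneg (((|i| : ℤ) : ℝ) - 4)]
    calc f ⟨i, hi⟩
        ≤ 2 * Real.exp (-1) * Real.sqrt (((gaussianReal 0 1)
            (Set.Icc (((i : ℤ) : ℝ) / 2 - 1 / 4) (((i : ℤ) : ℝ) / 2 + 1 / 4))).toReal) := h1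
      _ ≤ 2 * Real.exp (-1)
            * Real.sqrt (Real.exp (-((((|i| : ℤ) : ℝ) / 2 - 1 / 4) ^ 2) / 2) / 5) := by
          apply mul_le_mul_of_nonneg_left h2 (by positivity)
      _ = 2 * Real.exp (-1)
            * (Real.exp (-((((|i| : ℤ) : ℝ) / 2 - 1 / 4) ^ 2) / 4) / Real.sqrt 5) := by rw [h3]
      _ ≤ g (auxPhi ⟨i, hi⟩) := h4
  have hf_nonneg : ∀ p, 0 ≤ f p := by
    intro p
    apply Real.negMulLog_nonneg ENNReal.toReal_nonneg
    simpa using ENNReal.toReal_mono ENNReal.one_ne_top prob_le_one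
  have hgphi_summable : Summable (g ∘ auxPhi) :=
    hg_summable.comp_injective auxPhi_injective
  have hf_summable : Summable f :=
    Summable.of_nonneg_of_le hf_nonneg key hgphi_summable
  calc ∑' p, f p ≤ ∑' p, (g ∘ auxPhi) p := Summable.tsum_le_tsum key hf_summable hgphi_summable
    _ ≤ ∑' n, g n := tsum_comp_le_tsum_of_inj hg_summable hg_nonneg auxPhi_injective
    _ = 2 * Real.exp (-(99 / 64)) / Real.sqrt 5 * (1 - Real.exp (-(7 / 32)))⁻¹ := by
        rw [hgdef]
        rw [tsum_mul_left, tsum_geometric_of_lt_one hs0 hs1]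
    _ ≤ 1.21 := by
        have hexp_small : ∀ x : ℝ, 0 ≤ x → Real.exp (-x) ≤ (1 + x)⁻¹ := by
          intro x hx
          rw [Real.exp_neg, inv_le_inv₀ (Real.exp_pos x) (by linarith)]
          exact (Real.add_one_le_exp x).trans_eq' (by ring)
        have h99 : Real.exp (-(99 / 64)) ≤ (1024 / 1123 : ℝ) ^ 16 := by
          have hbase : Real.exp (-(99 / 1024)) ≤ (1024 / 1123 : ℝ) := by
            calc Real.exp (-(99 / 1024)) ≤ (1 + 99 / 1024 : ℝ)⁻¹ :=
                  hexp_small (99 / 1024) (by norm_num)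
              _ = (1024 / 1123 : ℝ) := by norm_num
          calc Real.exp (-(99 / 64)) = Real.exp (-(99 / 1024)) ^ 16 := by
                rw [← Real.exp_nat_mul]; norm_num
            _ ≤ (1024 / 1123 : ℝ) ^ 16 :=
                pow_le_pow_left₀ (Real.exp_nonneg _) hbase 16
        have h732 : Real.exp (-(7 / 32)) ≤ (32 / 39 : ℝ) := by
          calc Real.exp (-(7 / 32)) ≤ (1 + 7 / 32 : ℝ)⁻¹ := hexp_small (7 / 32) (by norm_num)
            _ = (32 / 39 : ℝ) := by norm_num
        have hinv : (1 - Real.exp (-(7 / 32)))⁻¹ ≤ (39 / 7 : ℝ) := by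
          rw [inv_le_comm₀ (by linarith) (by norm_num)]
          linarith
        have hC : 2 * Real.exp (-(99 / 64)) / Real.sqrt 5
            ≤ 2 * ((1024 / 1123 : ℝ) ^ 16) / (2236 / 1000) := by
          apply div_le_div₀ (by positivity) (by linarith) (by norm_num) hsqrt5
        have h16 : (2 : ℝ) * ((1024 / 1123 : ℝ) ^ 16) / (2236 / 1000) * (39 / 7) ≤ 1.21 := by
          rw [div_mul_eq_mul_div, div_le_iff₀ (by norm_num)]
          norm_num
        calc 2 * Real.exp (-(99 / 64)) / Real.sqrt 5 * (1 - Real.exp (-(7 / 32)))⁻¹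
            ≤ (2 * ((1024 / 1123 : ℝ) ^ 16) / (2236 / 1000)) * (39 / 7) := by
              apply mul_le_mul hC hinv (inv_nonneg.2 (by linarith)) (by positivity)
          _ ≤ 1.21 := h16
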